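/- Let G = (V, E) be a simple graph with n vertices V = {1, ..., n} and let m ≥ 2. If a matrix X ∈ ℝ^{n×n} is symmetric positive semidefinite, has rank at most m − 1, has every entry in the two-element set {1, −1/(m−1)}, has x_{ii} = 1 for every vertex i ∈ V, and has x_{ij} = −1/(m−1) for every edge {i, j} ∈ E, then there exists a proper m-coloring c : V → {1, ..., m} of G such that for all i, j ∈ V one has x_{ij} = 1 when c(i) = c(j) and x_{ij} = −1/(m−1) when c(i) ≠ c(j). -/

import Mathlib

/-- If a matrix `X ∈ ℝ^{n×n}` is symmetric positive semidefinite, has rank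
at most `m - 1`, has every entry in `{1, -1/(m-1)}`, has `X i i = 1` for every vertex, and
`X i j = -1/(m-1)` for every edge `{i,j}` of the graph `G`, then there is a proper
`m`-coloring `c` of `G` with `X i j = 1` whenever `c i = c j` and `X i j = -1/(m-1)`
whenever `c i ≠ c j`. -/
theorem stmt0 (n m : ℕ) (hm : 2 ≤ m) (G : SimpleGraph (Fin n))
    (X : Matrix (Fin n) (Fin n) ℝ)
    (hpsd : X.PosSemidef)
    (hrank : X.rank ≤ m - 1)
    (hentries : ∀ i j, X i j = 1 ∨ X i j = -1 / ((m : ℝ) - 1))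
    (hdiag : ∀ i, X i i = 1)
    (hedge : ∀ i j, G.Adj i j → X i j = -1 / ((m : ℝ) - 1)) :
    ∃ c : Fin n → Fin m,
      (∀ i j, G.Adj i j → c i ≠ c j) ∧
      (∀ i j, (c i = c j → X i j = 1) ∧ (c i ≠ c j → X i j = -1 / ((m : ℝ) - 1))) := by
  classical
  have hm2 : (2:ℝ) ≤ (m:ℝ) := by exact_mod_cast hm
  have hm1 : (0:ℝ) < (m:ℝ) - 1 := by linarith
  have hne : (-1 / ((m : ℝ) - 1)) ≠ 1 := by
    have : -1 / ((m:ℝ) - 1) < 0 := div_neg_of_neg_of_pos (by norm_num) hm1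
    linarith
  have hsymm : ∀ i j, X j i = X i j := by
    intro i j
    have := hpsd.1
    rw [Matrix.IsHermitian] at this
    conv_lhs => rw [← this]
    simp [Matrix.conjTranspose_apply]
  -- rows of equivalent vertices coincide
  have hrow : ∀ i j, X i j = 1 → ∀ k, X k i = X k j := by
    intro i j hij k
    by_cases h : i = j
    · subst h; rfl
    · set v : Fin n → ℝ := Pi.single i 1 - Pi.single j 1 with hv
      have hquad : dotProduct (star v) (X.mulVec v) = 0 := by
        have hmv : X.mulVec v = fun k => X k i - X k j := by
          ext k'
          simp [hv, Matrix.mulVec_sub]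
        rw [hmv]
        simp only [star_trivial, hv, dotProduct, Pi.sub_apply, Pi.single_apply]
        rw [Finset.sum_eq_add_of_mem i j (Finset.mem_univ i) (Finset.mem_univ j) h ?_]
        · simp [h, Ne.symm h, hdiag, hij, hsymm i j]
        · intro k _ hk
          simp [hk.1, hk.2]
      have h0 := (hpsd.dotProduct_mulVec_zero_iff v).mp hquad
      have hk := congrFun h0 k
      have hmvk : (X.mulVec v) k = X k i - X k j := by
        simp [hv, Matrix.mulVec_sub]
      rw [hmvk] at hk
      simp only [Pi.zero_apply] at hk
      linarith
  -- the equivalence relation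
  let s : Setoid (Fin n) := ⟨fun i j => X i j = 1, by
    constructor
    · exact hdiag
    · intro i j h; rw [hsymm i j]; exact h
    · intro i j k hij hjk
      have h2 := hrow i j hij k
      rw [hsymm k i, h2, hsymm j k]; exact hjk⟩
  have : Fintype (Quotient s) := Fintype.ofFinite _
  -- at most m classes
  have hcard : Fintype.card (Quotient s) ≤ m := by
    by_contra hlt
    push_neg at hlt
    obtain ⟨f⟩ := Function.Embedding.nonempty_of_card_le
      (show Fintype.card (Fin (m+1)) ≤ Fintype.card (Quotient s) by simpa using hlt)
    set g : Fin (m+1) → Fin n := fun a => (f a).out with hg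
    have hginj : Function.Injective g :=
      Quotient.out_injective.comp f.injective
    have hgneq : ∀ a b : Fin (m+1), a ≠ b → X (g a) (g b) = -1 / ((m:ℝ) - 1) := by
      intro a b hab
      rcases hentries (g a) (g b) with h | h
      · exfalso
        apply hab
        apply f.injective
        have : Quotient.mk s (g a) = Quotient.mk s (g b) := Quotient.sound h
        simpa [hg, Quotient.out_eq] using this
      · exact h
    -- quadratic form with indicator of range g
    set w : Fin n → ℝ := fun l => ∑ a : Fin (m+1), if g a = l then (1:ℝ) else 0 with hw
    have hmv : ∀ k, (X.mulVec w) k = ∑ a : Fin (m+1), X k (g a) := by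
      intro k
      simp only [Matrix.mulVec, dotProduct, hw, Finset.mul_sum, mul_ite, mul_one, mul_zero]
      rw [Finset.sum_comm]
      simp
    have hQ : dotProduct (star w) (X.mulVec w) = ∑ a : Fin (m+1), ∑ b : Fin (m+1), X (g a) (g b) := by
      simp only [dotProduct, hmv]
      simp only [star_trivial, dotProduct, hmv, hw, Finset.sum_mul, ite_mul, one_mul,
        zero_mul]
      rw [Finset.sum_comm]
      simp
    have hval : ∀ a : Fin (m+1), ∑ b : Fin (m+1), X (g a) (g b) = 1 + m * (-1 / ((m:ℝ) - 1)) := by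
      intro a
      rw [← Finset.sum_erase_add _ _ (Finset.mem_univ a), hdiag]
      have : ∑ b ∈ Finset.univ.erase a, X (g a) (g b)
          = ∑ b ∈ Finset.univ.erase a, (-1 / ((m:ℝ) - 1)) := by
        apply Finset.sum_congr rfl
        intro b hb
        exact hgneq a b (Ne.symm (Finset.ne_of_mem_erase hb))
      rw [this, Finset.sum_const, Finset.card_erase_of_mem (Finset.mem_univ a)]
      simp only [Finset.card_univ, Fintype.card_fin, Nat.add_sub_cancel, nsmul_eq_mul]
      ring
    have hQval : dotProduct (star w) (X.mulVec w) = (m+1 : ℝ) * (1 + m * (-1 / ((m:ℝ) - 1))) := by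
      rw [hQ, Finset.sum_congr rfl (fun a _ => hval a), Finset.sum_const]
      simp only [Finset.card_univ, Fintype.card_fin, nsmul_eq_mul]
      push_cast
      ring
    have hpos := hpsd.dotProduct_mulVec_nonneg w
    rw [hQval] at hpos
    have hneg : (m+1 : ℝ) * (1 + m * (-1 / ((m:ℝ) - 1))) < 0 := by
      have h1 : 1 + (m:ℝ) * (-1 / ((m:ℝ) - 1)) = -1 / ((m:ℝ) - 1) := by
        field_simp
        ring
      rw [h1]
      have : -1 / ((m:ℝ) - 1) < 0 := div_neg_of_neg_of_pos (by norm_num) hm1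
      nlinarith
    linarith
  -- build the coloring
  obtain ⟨e⟩ := Function.Embedding.nonempty_of_card_le
    (show Fintype.card (Quotient s) ≤ Fintype.card (Fin m) by simpa using hcard)
  refine ⟨fun i => e (Quotient.mk s i), ?_, ?_⟩
  · intro i j hadj hc
    have h1 : X i j = 1 := Quotient.exact (e.injective hc)
    rw [hedge i j hadj] at h1
    exact hne h1
  · intro i j
    constructor
    · intro hc
      exact Quotient.exact (e.injective hc)
    · intro hc
      rcases hentries i j with h | h
      · exact absurd (congrArg e (Quotient.sound h)) hc
      · exact h
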